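/- Let 𝓚 be a complex Hilbert space, T : 𝓚 →L[ℂ] 𝓚 a bounded operator whose imaginary part ℑT := (2i)⁻¹(T - T*) is a positive operator, B : 𝓚 →L[ℂ] 𝓚 a bounded self-adjoint operator, r ∈ ℝ with r ≠ 0, and ψ ∈ 𝓚 such that r · B T B ψ = -ψ. Then (ℑT)(Bψ) = 0 and r · B (ℜT) B ψ = -ψ, where ℜT := (T + T*)/2. -/

import Mathlib

open ContinuousLinearMap Complex

variable {𝓚 : Type*} [NormedAddCommGroup 𝓚] [InnerProductSpace ℂ 𝓚] [CompleteSpace 𝓚]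

/-- If `T` has positive imaginary part, `B` is self-adjoint, `r ≠ 0` and `r B T B ψ = -ψ`,
then `(ℑT)(Bψ) = 0` and `r B (ℜT) B ψ = -ψ`. -/
theorem imaginary_part_vanishes_on_eigenvector
    (T : 𝓚 →L[ℂ] 𝓚)
    (hIm : (((2 : ℂ) * Complex.I)⁻¹ • (T - adjoint T)).IsPositive)
    (B : 𝓚 →L[ℂ] 𝓚) (hB : IsSelfAdjoint B)
    (r : ℝ) (hr : r ≠ 0) (ψ : 𝓚)
    (hψ : (r : ℂ) • ((B ∘L T ∘L B) ψ) = -ψ) :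
    (((2 : ℂ) * Complex.I)⁻¹ • (T - adjoint T)) (B ψ) = 0 ∧
      (r : ℂ) • ((B ∘L ((2 : ℂ)⁻¹ • (T + adjoint T)) ∘L B) ψ) = -ψ := by
  set S : 𝓚 →L[ℂ] 𝓚 := ((2 : ℂ) * Complex.I)⁻¹ • (T - adjoint T) with hS
  set R : 𝓚 →L[ℂ] 𝓚 := (2 : ℂ)⁻¹ • (T + adjoint T) with hR
  -- decomposition T = R + I • S
  have h1 : Complex.I * ((2 : ℂ) * Complex.I)⁻¹ = (2 : ℂ)⁻¹ := by
    field_simp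
  have hdec : R + Complex.I • S = T := by
    rw [hR, hS, smul_smul, h1]
    module
  -- square root of S
  obtain ⟨p, hp_sa, -, hp_sq⟩ :=
    CFC.exists_sqrt_of_isSelfAdjoint_of_quasispectrumRestricts hIm.isSelfAdjoint hIm.spectrumRestricts
  have hpS : ∀ x, S x = p (p x) := by
    intro x
    rw [← hp_sq]
    simp [sq]
  -- inner product equation
  have hinner : (r : ℂ) * inner ℂ ψ ((B ∘L T ∘L B) ψ) = -(inner ℂ ψ ψ : ℂ) := by
    rw [← inner_neg_right, ← hψ, inner_smul_right]
  have hBsym := hB.isSymmetric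
  have hinner2 : (inner ℂ ψ ((B ∘L T ∘L B) ψ) : ℂ) = inner ℂ (B ψ) (T (B ψ)) := by
    simp only [comp_apply]
    exact (hBsym ψ (T (B ψ))).symm
  -- the S-inner product is a real square
  have hb : (inner ℂ (B ψ) (S (B ψ)) : ℂ) = ((‖p (B ψ)‖ ^ 2 : ℝ) : ℂ) := by
    rw [hpS, ← ContinuousLinearMap.adjoint_inner_left, hp_sa.adjoint_eq]
    rw [inner_self_eq_norm_sq_to_K]
    norm_num
  -- the R-inner product is real
  have hRsa : IsSelfAdjoint R := by
    have h2 : star ((2 : ℂ)⁻¹) = (2 : ℂ)⁻¹ := by simp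
    rw [hR, isSelfAdjoint_iff, star_smul, h2, star_add, star_eq_adjoint, star_eq_adjoint,
      adjoint_adjoint, add_comm]
  have ha : (inner ℂ (B ψ) (R (B ψ)) : ℂ).im = 0 := by
    have hsymm := hRsa.isSymmetric (B ψ) (B ψ)
    have hconj : (starRingEnd ℂ) (inner ℂ (B ψ) (R (B ψ)) : ℂ) = inner ℂ (B ψ) (R (B ψ)) := by
      rw [inner_conj_symm]
      exact hsymm
    exact Complex.conj_eq_iff_im.mp hconj
  -- expand T in the inner product
  have hexp : (inner ℂ (B ψ) (T (B ψ)) : ℂ)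
      = inner ℂ (B ψ) (R (B ψ)) + Complex.I * inner ℂ (B ψ) (S (B ψ)) := by
    conv_lhs => rw [← hdec]
    simp [inner_add_right, inner_smul_right]
  -- take imaginary parts
  have him : ((r : ℂ) * inner ℂ ψ ((B ∘L T ∘L B) ψ)).im = 0 := by
    rw [hinner, inner_self_eq_norm_sq_to_K]
    simp [← Complex.ofReal_pow]
  rw [hinner2, hexp, hb] at him
  have hpz : ‖p (B ψ)‖ ^ 2 = 0 := by
    simp [Complex.mul_im, Complex.add_im, ha] at him
    rcases him with h | h
    · exact absurd h hr
    · rw [← Complex.ofReal_pow, Complex.ofReal_re] at h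
      exact h
  have hpBψ : p (B ψ) = 0 := by
    have := pow_eq_zero_iff (n := 2) (by norm_num) |>.mp hpz
    exact norm_eq_zero.mp this
  have hSBψ : S (B ψ) = 0 := by rw [hpS, hpBψ, map_zero]
  refine ⟨hSBψ, ?_⟩
  have hBRB : (B ∘L R ∘L B) ψ = (B ∘L T ∘L B) ψ := by
    simp only [comp_apply]
    conv_rhs => rw [← hdec]
    simp [hSBψ]
  rw [hBRB, hψ]
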